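/- Define erf(x) = (2/√π)·∫₀^x e^{−t²} dt, a strictly increasing bijection from ℝ onto (−1,1), and let erf⁻¹ denote its inverse. There exists a constant C > 0 such that for every integer m ≥ 1 and every θ ∈ [−1,1] the following holds. Let X_1, …, X_m be independent random variables each with law N(θ, 1); set B_i = 1 if X_i ≥ 0 and B_i = −1 otherwise; set B = (1/m)·Σ_{i=1}^m B_i; and define the estimator θ̂ = 1 if B ≥ erf(1/√2), θ̂ = −1 if B ≤ −erf(1/√2), and θ̂ = √2·erf⁻¹(B) otherwise (i.e., θ̂ is the truncation of √2·erf⁻¹(B) to the interval [−1,1]). Then E[(θ̂ − θ)²] ≤ C/m. -/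

import Mathlib

open MeasureTheory ProbabilityTheory
open scoped ENNReal NNReal Classical

/-- The Gauss error function `erf(x) = (2/√π)·∫₀^x e^{−t²} dt`. -/
noncomputable def erf (x : ℝ) : ℝ :=
  (2 / Real.sqrt Real.pi) * ∫ t in (0 : ℝ)..x, Real.exp (-t ^ 2)

/-- The inverse of the Gauss error function (on its range `(−1,1)`). -/
noncomputable def erfInv : ℝ → ℝ := Function.invFun erf

/-- The estimator: `θ̂(B) = √2·erf⁻¹(B)` truncated to `[−1, 1]`
(equivalently, truncating `B` to `[−erf(1/√2), erf(1/√2)]` before inverting). -/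
noncomputable def oneBitEstimator (B : ℝ) : ℝ :=
  if erf (1 / Real.sqrt 2) ≤ B then 1
  else if B ≤ -erf (1 / Real.sqrt 2) then -1
  else Real.sqrt 2 * erfInv B

lemma expsq_cont : Continuous (fun t : ℝ => Real.exp (-t ^ 2)) := by continuity

lemma expsq_ii (a b : ℝ) : IntervalIntegrable (fun t : ℝ => Real.exp (-t ^ 2)) volume a b :=
  expsq_cont.intervalIntegrable a b

lemma sqrt_pi_pos : 0 < Real.sqrt Real.pi := Real.sqrt_pos.mpr Real.pi_pos

lemma erf_sub_erf (u v : ℝ) :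
    erf v - erf u = (2 / Real.sqrt Real.pi) * ∫ t in u..v, Real.exp (-t ^ 2) := by
  rw [erf, erf, ← mul_sub, intervalIntegral.integral_interval_sub_left (expsq_ii 0 v) (expsq_ii 0 u)]

lemma erf_strictMono : StrictMono erf := by
  intro u v huv
  have h : 0 < erf v - erf u := by
    rw [erf_sub_erf]
    refine mul_pos (by positivity) ?_
    refine intervalIntegral.intervalIntegral_pos_of_pos_on (expsq_ii u v) ?_ huv
    intro x _; positivity
  linarith

lemma erf_neg (x : ℝ) : erf (-x) = - erf x := by
  have h : ∫ t in (0:ℝ)..(-x), Real.exp (-t ^ 2) = - ∫ t in (0:ℝ)..x, Real.exp (-t ^ 2) := by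
    rw [intervalIntegral.integral_symm]
    have := intervalIntegral.integral_comp_neg (a := 0) (b := x) (fun t : ℝ => Real.exp (-t ^ 2))
    simp only [neg_zero, neg_neg, even_two, Even.neg_pow] at this ⊢
    rw [← this]
  rw [erf, erf, h, mul_neg]

lemma erf_continuous : Continuous erf :=
  continuous_const.mul (intervalIntegral.continuous_primitive (fun a b => expsq_ii a b) 0)

noncomputable def cLow : ℝ := 2 / Real.sqrt Real.pi * Real.exp (-2⁻¹)

lemma cLow_pos : 0 < cLow := by
  unfold cLow; positivity

lemma erf_incr_lower {u v : ℝ} (hu : -(1 / Real.sqrt 2) ≤ u) (huv : u ≤ v)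
    (hv : v ≤ 1 / Real.sqrt 2) : cLow * (v - u) ≤ erf v - erf u := by
  rw [erf_sub_erf]
  have hbound : ∀ x ∈ Set.Icc u v, Real.exp (-2⁻¹) ≤ Real.exp (-x ^ 2) := by
    intro x hx
    apply Real.exp_le_exp.mpr
    have h2 : x ^ 2 ≤ 2⁻¹ := by
      have : |x| ≤ 1 / Real.sqrt 2 := abs_le.mpr ⟨le_trans hu hx.1, le_trans hx.2 hv⟩
      calc x ^ 2 = |x| ^ 2 := (sq_abs x).symm
        _ ≤ (1 / Real.sqrt 2) ^ 2 := by
            exact pow_le_pow_left₀ (abs_nonneg x) this 2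
        _ = 2⁻¹ := by
            rw [div_pow, one_pow, Real.sq_sqrt (by norm_num : (0:ℝ) ≤ 2)]
            norm_num
    linarith
  have := intervalIntegral.integral_mono_on huv
    (intervalIntegrable_const (c := Real.exp (-2⁻¹))) (expsq_ii u v) hbound
  rw [intervalIntegral.integral_const, smul_eq_mul] at this
  calc cLow * (v - u) = 2 / Real.sqrt Real.pi * ((v - u) * Real.exp (-2⁻¹)) := by
        unfold cLow; ring
    _ ≤ 2 / Real.sqrt Real.pi * ∫ t in u..v, Real.exp (-t ^ 2) := by
        apply mul_le_mul_of_nonneg_left this (by positivity)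

noncomputable def Kc : ℝ := Real.sqrt 2 * (Real.sqrt Real.pi * Real.exp 2⁻¹ / 2)

lemma Kc_pos : 0 < Kc := by
  unfold Kc
  have := sqrt_pi_pos
  positivity

lemma cLow_mul_Kc : cLow * Kc = Real.sqrt 2 := by
  unfold cLow Kc
  rw [Real.exp_neg]
  field_simp

lemma abs_le_inv_sqrt2 {θ : ℝ} (h1 : -1 ≤ θ) (h2 : θ ≤ 1) :
    |θ / Real.sqrt 2| ≤ 1 / Real.sqrt 2 := by
  rw [abs_div, abs_of_pos (show (0:ℝ) < Real.sqrt 2 by positivity)]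
  apply div_le_div_of_nonneg_right ?_ ?_ |>.trans_eq rfl
  · exact abs_le.mpr ⟨h1, h2⟩
  · positivity

lemma key_lip {u v : ℝ} (hu : |u| ≤ 1 / Real.sqrt 2) (hv : |v| ≤ 1 / Real.sqrt 2)
    (hvu : v ≤ u) : Real.sqrt 2 * (u - v) ≤ Kc * (erf u - erf v) := by
  have h := erf_incr_lower (u := v) (v := u) (neg_le_of_abs_le hv) hvu (le_of_abs_le hu)
  calc Real.sqrt 2 * (u - v) = Kc * (cLow * (u - v)) := by rw [← cLow_mul_Kc]; ring
    _ ≤ Kc * (erf u - erf v) := mul_le_mul_of_nonneg_left h Kc_pos.le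

lemma exists_erf_eq {y : ℝ} (h1 : -erf (1 / Real.sqrt 2) ≤ y) (h2 : y ≤ erf (1 / Real.sqrt 2)) :
    ∃ x, |x| ≤ 1 / Real.sqrt 2 ∧ erf x = y := by
  have hle : -(1 / Real.sqrt 2) ≤ 1 / Real.sqrt 2 := by
    have : (0:ℝ) < 1 / Real.sqrt 2 := by positivity
    linarith
  have := intermediate_value_Icc hle erf_continuous.continuousOn
  rw [erf_neg] at this
  obtain ⟨x, hx, hxy⟩ := this ⟨h1, h2⟩
  exact ⟨x, abs_le.mpr ⟨hx.1, hx.2⟩, hxy⟩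

lemma erfInv_erf (x : ℝ) : erfInv (erf x) = x :=
  Function.leftInverse_invFun erf_strictMono.injective x

lemma sq_key {u v : ℝ} (hu : |u| ≤ 1 / Real.sqrt 2) (hv : |v| ≤ 1 / Real.sqrt 2) :
    (Real.sqrt 2 * u - Real.sqrt 2 * v) ^ 2 ≤ Kc ^ 2 * (erf u - erf v) ^ 2 := by
  rcases le_total v u with h | h
  · have h1 := key_lip hu hv h
    have h2 : (0:ℝ) ≤ Real.sqrt 2 * (u - v) := by
      have : (0:ℝ) ≤ Real.sqrt 2 := by positivity
      nlinarith
    calc (Real.sqrt 2 * u - Real.sqrt 2 * v) ^ 2 = (Real.sqrt 2 * (u - v)) ^ 2 := by ring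
      _ ≤ (Kc * (erf u - erf v)) ^ 2 := pow_le_pow_left₀ h2 h1 2
      _ = Kc ^ 2 * (erf u - erf v) ^ 2 := by ring
  · have h1 := key_lip hv hu h
    have h2 : (0:ℝ) ≤ Real.sqrt 2 * (v - u) := by
      have : (0:ℝ) ≤ Real.sqrt 2 := by positivity
      nlinarith
    calc (Real.sqrt 2 * u - Real.sqrt 2 * v) ^ 2 = (Real.sqrt 2 * (v - u)) ^ 2 := by ring
      _ ≤ (Kc * (erf v - erf u)) ^ 2 := pow_le_pow_left₀ h2 h1 2
      _ = Kc ^ 2 * (erf u - erf v) ^ 2 := by ring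

lemma pointwise_bound {θ B : ℝ} (hθ1 : -1 ≤ θ) (hθ2 : θ ≤ 1) :
    (oneBitEstimator B - θ) ^ 2 ≤ Kc ^ 2 * (B - erf (θ / Real.sqrt 2)) ^ 2 := by
  have hs2 : (0:ℝ) < Real.sqrt 2 := by positivity
  set a := erf (1 / Real.sqrt 2) with ha
  set μ := erf (θ / Real.sqrt 2) with hμ
  have hθs : |θ / Real.sqrt 2| ≤ 1 / Real.sqrt 2 := abs_le_inv_sqrt2 hθ1 hθ2
  have hss : |1 / Real.sqrt 2| ≤ 1 / Real.sqrt 2 := by rw [abs_of_pos (by positivity)]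
  have hμa : μ ≤ a := erf_strictMono.monotone (le_of_abs_le hθs)
  have haμ : -a ≤ μ := by
    rw [← erf_neg]
    exact erf_strictMono.monotone (neg_le_of_abs_le hθs)
  have hsθ : Real.sqrt 2 * (θ / Real.sqrt 2) = θ := by field_simp
  have hs1 : Real.sqrt 2 * (1 / Real.sqrt 2) = 1 := by field_simp
  unfold oneBitEstimator
  rw [← ha]
  split_ifs with h1 h2
  · -- B ≥ a, estimator = 1
    have key := key_lip hss hθs (le_of_abs_le hθs)
    have key2 : 1 - θ ≤ Kc * (a - μ) := by
      rw [mul_sub, hs1, hsθ] at key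
      exact key
    have hBμ : 0 ≤ B - μ := by linarith
    have hKc := Kc_pos
    have : 1 - θ ≤ Kc * (B - μ) := by nlinarith
    calc (1 - θ) ^ 2 ≤ (Kc * (B - μ)) ^ 2 := pow_le_pow_left₀ (by linarith) this 2
      _ = Kc ^ 2 * (B - μ) ^ 2 := by ring
  · -- B ≤ -a, estimator = -1
    have hvabs : |(-(1 / Real.sqrt 2))| ≤ 1 / Real.sqrt 2 := by rw [abs_neg]; exact hss
    have key := key_lip hθs hvabs (neg_le_of_abs_le hθs)
    have key2 : θ + 1 ≤ Kc * (μ + a) := by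
      rw [mul_sub, hsθ, mul_neg, hs1, erf_neg] at key
      rw [← ha, ← hμ] at key
      linarith
    have hμB : 0 ≤ μ - B := by linarith
    have hKc := Kc_pos
    have : θ + 1 ≤ Kc * (μ - B) := by nlinarith
    calc (-1 - θ) ^ 2 = (θ + 1) ^ 2 := by ring
      _ ≤ (Kc * (μ - B)) ^ 2 := pow_le_pow_left₀ (by linarith) this 2
      _ = Kc ^ 2 * (B - μ) ^ 2 := by ring
  · -- middle case
    push_neg at h1 h2
    obtain ⟨x, hx, hxB⟩ := exists_erf_eq (y := B) (by linarith) (by linarith)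
    rw [← hxB, erfInv_erf, hxB]
    have := sq_key hx hθs
    rw [hsθ, hxB, ← hμ] at this
    exact this


-- std normal pdf facts
lemma psi_eq (u : ℝ) :
    gaussianPDFReal 0 1 u = (Real.sqrt (2 * Real.pi))⁻¹ * Real.exp (-(2⁻¹) * u ^ 2) := by
  simp only [gaussianPDFReal, NNReal.coe_one, mul_one, sub_zero]
  ring_nf

lemma psi_even (u : ℝ) : gaussianPDFReal 0 1 (-u) = gaussianPDFReal 0 1 u := by
  rw [psi_eq, psi_eq, neg_sq]

lemma integral_psi_Ioi : ∫ u in Set.Ioi (0:ℝ), gaussianPDFReal 0 1 u = 1 / 2 := by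
  simp_rw [psi_eq]
  rw [MeasureTheory.integral_const_mul, integral_gaussian_Ioi]
  have h1 : Real.pi / 2⁻¹ = 2 * Real.pi := by ring
  rw [h1]
  have h2 : Real.sqrt (2 * Real.pi) ≠ 0 := by positivity
  field_simp

lemma integral_psi_total : ∫ u, gaussianPDFReal 0 1 u = 1 :=
  integral_gaussianPDFReal_eq_one 0 one_ne_zero

lemma integral_psi_Iic : ∫ u in Set.Iic (0:ℝ), gaussianPDFReal 0 1 u = 1 / 2 := by
  have h := integral_add_compl (measurableSet_Iic (a := (0:ℝ)))
    (integrable_gaussianPDFReal 0 1)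
  rw [Set.compl_Iic, integral_psi_Ioi, integral_psi_total] at h
  linarith

lemma psi_ii (a b : ℝ) : IntervalIntegrable (gaussianPDFReal 0 1) volume a b :=
  (integrable_gaussianPDFReal 0 1).intervalIntegrable

lemma interval_psi (θ : ℝ) :
    ∫ x in (0:ℝ)..θ, gaussianPDFReal 0 1 x = erf (θ / Real.sqrt 2) / 2 := by
  have hsub : ∀ x : ℝ, Real.exp (-(2⁻¹) * x ^ 2)
      = (fun t : ℝ => Real.exp (-t ^ 2)) (x / Real.sqrt 2) := by
    intro x
    simp only []
    rw [div_pow, Real.sq_sqrt (by norm_num : (0:ℝ) ≤ 2)]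
    ring_nf
  have h1 : ∫ x in (0:ℝ)..θ, gaussianPDFReal 0 1 x
      = (Real.sqrt (2 * Real.pi))⁻¹ * ∫ x in (0:ℝ)..θ,
          (fun t : ℝ => Real.exp (-t ^ 2)) (x / Real.sqrt 2) := by
    simp_rw [psi_eq, hsub]
    rw [intervalIntegral.integral_const_mul]
  have h2 := intervalIntegral.integral_comp_div (a := (0:ℝ)) (b := θ) (c := Real.sqrt 2)
    (fun t : ℝ => Real.exp (-t ^ 2)) (by positivity : Real.sqrt 2 ≠ 0)
  rw [zero_div] at h2
  rw [h1, h2, erf]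
  have h3 : Real.sqrt (2 * Real.pi) = Real.sqrt 2 * Real.sqrt Real.pi := by
    rw [Real.sqrt_mul (by norm_num)]
  rw [smul_eq_mul, h3]
  have h4 : Real.sqrt 2 ≠ 0 := by positivity
  have h5 : Real.sqrt Real.pi ≠ 0 := by positivity
  field_simp

lemma pdf_shift (θ : ℝ) (x : ℝ) : gaussianPDFReal θ 1 (x + θ) = gaussianPDFReal 0 1 x := by
  simp [gaussianPDFReal]

lemma integral_Ici_pdf (θ : ℝ) :
    ∫ x in Set.Ici (0:ℝ), gaussianPDFReal θ 1 x
      = ∫ u in Set.Ici (-θ), gaussianPDFReal 0 1 u := by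
  have h := (measurePreserving_add_right volume θ).setIntegral_preimage_emb
    (measurableEmbedding_addRight θ) (gaussianPDFReal θ 1) (Set.Ici 0)
  have hpre : (fun x => x + θ) ⁻¹' Set.Ici (0:ℝ) = Set.Ici (-θ) := by
    ext x; simp only [Set.mem_preimage, Set.mem_Ici]; constructor <;> intro <;> linarith
  rw [hpre] at h
  rw [← h]
  apply setIntegral_congr_fun (measurableSet_Ici)
  intro x _
  exact pdf_shift θ x

lemma integral_Ici_pdf_val (θ : ℝ) :
    ∫ x in Set.Ici (0:ℝ), gaussianPDFReal θ 1 x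
      = 1 / 2 + erf (θ / Real.sqrt 2) / 2 := by
  rw [integral_Ici_pdf]
  have hInt := integrable_gaussianPDFReal 0 1
  -- Ici (−θ) = complement of Iio (−θ)
  have hcompl := integral_add_compl (measurableSet_Iio (a := (-θ:ℝ))) hInt
  rw [Set.compl_Iio, integral_psi_total] at hcompl
  have hIio : ∫ u in Set.Iio (-θ), gaussianPDFReal 0 1 u
      = ∫ u in Set.Iic (-θ), gaussianPDFReal 0 1 u :=
    (integral_Iic_eq_integral_Iio).symm
  have hsub := intervalIntegral.integral_Iic_sub_Iic (hInt.integrableOn (s := Set.Iic (0:ℝ)))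
    (hInt.integrableOn (s := Set.Iic (-θ)))
  rw [integral_psi_Iic] at hsub
  -- hsub : ∫ Iic (−θ) − 1/2 = ∫ 0..(−θ) ψ
  have heven : ∫ x in (0:ℝ)..(-θ), gaussianPDFReal 0 1 x
      = - ∫ x in (0:ℝ)..θ, gaussianPDFReal 0 1 x := by
    rw [intervalIntegral.integral_symm]
    have h := intervalIntegral.integral_comp_neg (a := (0:ℝ)) (b := θ) (gaussianPDFReal 0 1)
    simp_rw [psi_even, neg_zero] at h
    rw [← h]
  rw [heven, interval_psi] at hsub
  linarith

lemma integral_sign_gaussian (θ : ℝ) :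
    ∫ x, (if 0 ≤ x then (1:ℝ) else -1) ∂(gaussianReal θ 1) = erf (θ / Real.sqrt 2) := by
  have hφmeas := measurable_gaussianPDFReal θ 1
  have hφnn := gaussianPDFReal_nonneg θ 1
  have hφint := integrable_gaussianPDFReal θ 1
  have hsmeas : Measurable (fun x : ℝ => if 0 ≤ x then (1:ℝ) else -1) := by
    apply Measurable.ite _ measurable_const measurable_const
    exact measurableSet_Ici
  have step1 : ∫ x, (if 0 ≤ x then (1:ℝ) else -1) ∂(gaussianReal θ 1)
      = ∫ x, gaussianPDFReal θ 1 x * (if 0 ≤ x then (1:ℝ) else -1) := by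
    rw [gaussianReal_of_var_ne_zero θ one_ne_zero]
    have h1 : gaussianPDF θ 1 = fun x => ((gaussianPDFReal θ 1 x).toNNReal : ℝ≥0∞) := rfl
    rw [h1, integral_withDensity_eq_integral_smul (hφmeas.real_toNNReal)]
    congr 1
    ext x
    rw [NNReal.smul_def, Real.coe_toNNReal _ (hφnn x), smul_eq_mul]
  have hφs_int : Integrable (fun x => gaussianPDFReal θ 1 x * (if 0 ≤ x then (1:ℝ) else -1)) := by
    apply hφint.mono' ((hφmeas.mul hsmeas).aestronglyMeasurable)
    filter_upwards with x
    rw [Pi.mul_apply, norm_mul, Real.norm_eq_abs, Real.norm_eq_abs, abs_of_nonneg (hφnn x)]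
    split_ifs <;> simp
  have hsplit := integral_add_compl (measurableSet_Ici (a := (0:ℝ))) hφs_int
  have hIci : ∫ x in Set.Ici (0:ℝ), gaussianPDFReal θ 1 x * (if 0 ≤ x then (1:ℝ) else -1)
      = ∫ x in Set.Ici (0:ℝ), gaussianPDFReal θ 1 x := by
    apply setIntegral_congr_fun measurableSet_Ici
    intro x hx
    dsimp only
    have hx' : (0:ℝ) ≤ x := hx
    rw [if_pos hx', mul_one]
  have hIio : ∫ x in (Set.Ici (0:ℝ))ᶜ, gaussianPDFReal θ 1 x * (if 0 ≤ x then (1:ℝ) else -1)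
      = - ∫ x in (Set.Ici (0:ℝ))ᶜ, gaussianPDFReal θ 1 x := by
    rw [← integral_neg]
    apply setIntegral_congr_fun (measurableSet_Ici.compl)
    intro x hx
    rw [Set.compl_Ici, Set.mem_Iio] at hx
    dsimp only
    rw [if_neg (not_le.mpr hx)]
    ring
  have htot := integral_add_compl (measurableSet_Ici (a := (0:ℝ))) hφint
  rw [integral_gaussianPDFReal_eq_one θ one_ne_zero] at htot
  have hIci' : ∫ x in Set.Ici (0:ℝ), gaussianPDFReal θ 1 x * (if 0 ≤ x then (1:ℝ) else -1)
      = 1 / 2 + erf (θ / Real.sqrt 2) / 2 := hIci.trans (integral_Ici_pdf_val θ)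
  rw [integral_Ici_pdf_val θ] at htot
  rw [step1, ← hsplit, hIci', hIio]
  linarith


lemma pi_second_moment {ν : Measure ℝ} [IsProbabilityMeasure ν] {s : ℝ → ℝ}
    (hs : Measurable s) (hb : ∀ x, |s x| ≤ 1) {c : ℝ} (hc : |c| ≤ 1)
    (hmean : ∫ x, s x ∂ν = c) (m : ℕ) (hm : 1 ≤ m) :
    ∫ ω : Fin m → ℝ, ((1 / (m:ℝ)) * ∑ i, s (ω i) - c) ^ 2 ∂(Measure.pi fun _ : Fin m => ν)
      ≤ 4 / (m:ℝ) := by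
  letI : MeasureSpace ℝ := ⟨ν⟩
  haveI : IsProbabilityMeasure (volume : Measure ℝ) := ‹IsProbabilityMeasure ν›
  have hvol : (volume : Measure (Fin m → ℝ)) = Measure.pi fun _ : Fin m => ν := rfl
  set d : ℝ → ℝ := fun x => s x - c with hd
  have hdmeas : Measurable d := hs.sub measurable_const
  have hdbound : ∀ x, |d x| ≤ 2 := by
    intro x
    have h1 := abs_le.mp (hb x)
    have h2 := abs_le.mp hc
    exact abs_le.mpr ⟨by simp only [hd]; linarith, by simp only [hd]; linarith⟩
  have hdint : Integrable d ν := by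
    apply (integrable_const (2:ℝ)).mono' hdmeas.aestronglyMeasurable
    filter_upwards with x
    exact hdbound x
  have hsint : Integrable s ν := by
    apply (integrable_const (1:ℝ)).mono' hs.aestronglyMeasurable
    filter_upwards with x
    exact hb x
  have hdmean : ∫ x, d x ∂ν = 0 := by
    simp only [hd]
    rw [integral_sub hsint (integrable_const c), hmean, integral_const]
    simp
  have hd2int : Integrable (fun x => d x * d x) ν := by
    apply (integrable_const (4:ℝ)).mono' (hdmeas.mul hdmeas).aestronglyMeasurable
    filter_upwards with x
    rw [Real.norm_eq_abs, Pi.mul_apply, abs_mul]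
    nlinarith [hdbound x, abs_nonneg (d x)]
  have hd2le : ∫ x, d x * d x ∂ν ≤ 4 := by
    calc ∫ x, d x * d x ∂ν ≤ ∫ _x, (4:ℝ) ∂ν := by
          apply integral_mono hd2int (integrable_const 4)
          intro x
          have h1 := abs_le.mp (hdbound x)
          dsimp only
          nlinarith [h1.1, h1.2]
      _ = 4 := by simp
  set g : Fin m → Fin m → Fin m → ℝ → ℝ :=
    fun i j k x => (if k = i then d x else 1) * (if k = j then d x else 1) with hg
  have hgint : ∀ i j k, Integrable (g i j k) ν := by
    intro i j k
    by_cases hki : k = i <;> by_cases hkj : k = j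
    · subst hki; subst hkj
      simp only [hg, if_pos rfl]
      exact hd2int
    · subst hki
      simp only [hg, if_pos rfl, if_neg hkj, mul_one]
      exact hdint
    · subst hkj
      simp only [hg, if_pos rfl, if_neg hki, one_mul]
      exact hdint
    · simp only [hg, if_neg hki, if_neg hkj, mul_one]
      exact integrable_const 1
  have hprod : ∀ i j (ω : Fin m → ℝ), (∏ k, g i j k (ω k)) = d (ω i) * d (ω j) := by
    intro i j ω
    simp only [hg, Finset.prod_mul_distrib]
    congr 1 <;> simp [Finset.prod_ite_eq']
  have hpint : ∀ i j, Integrable (fun ω : Fin m → ℝ => d (ω i) * d (ω j))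
      (Measure.pi fun _ : Fin m => ν) := by
    intro i j
    rw [← hvol]
    exact (Integrable.fintype_prod (f := g i j) (fun k => hgint i j k)).congr
      (Filter.Eventually.of_forall fun ω => hprod i j ω)
  have hterm : ∀ i j, ∫ ω : Fin m → ℝ, d (ω i) * d (ω j) ∂(Measure.pi fun _ : Fin m => ν)
      = ∏ k, ∫ x, g i j k x ∂ν := by
    intro i j
    rw [← hvol]
    rw [show (fun ω : Fin m → ℝ => d (ω i) * d (ω j))
        = fun ω : Fin m → ℝ => ∏ k, g i j k (ω k) from funext fun ω => (hprod i j ω).symm]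
    exact integral_fintype_prod_eq_prod (ι := Fin m) (g i j)
  have hoff : ∀ i j : Fin m, i ≠ j → (∏ k, ∫ x, g i j k x ∂ν) = 0 := by
    intro i j hij
    apply Finset.prod_eq_zero (Finset.mem_univ i)
    simp only [hg, if_pos rfl, if_neg hij, mul_one]
    exact hdmean
  have hdiag : ∀ i : Fin m, (∏ k, ∫ x, g i i k x ∂ν) = ∫ x, d x * d x ∂ν := by
    intro i
    rw [Finset.prod_eq_single i]
    · simp [hg]
    · intro b _ hbi
      simp only [hg, if_neg hbi, mul_one]
      simp
    · simp
  have hm0 : (m:ℝ) ≠ 0 := by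
    have : (0:ℝ) < m := by exact_mod_cast hm
    linarith
  -- rewrite the integrand
  have hpt : ∀ ω : Fin m → ℝ, ((1 / (m:ℝ)) * ∑ i, s (ω i) - c) ^ 2
      = (1 / (m:ℝ))^2 * (∑ i, ∑ j, d (ω i) * d (ω j)) := by
    intro ω
    have h1 : (1 / (m:ℝ)) * ∑ i, s (ω i) - c = (1 / (m:ℝ)) * ∑ i, d (ω i) := by
      simp only [hd, Finset.sum_sub_distrib, Finset.sum_const, Finset.card_univ,
        Fintype.card_fin, nsmul_eq_mul]
      field_simp
    rw [h1, mul_pow, sq (∑ i, d (ω i)), Finset.sum_mul_sum]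
  calc ∫ ω : Fin m → ℝ, ((1 / (m:ℝ)) * ∑ i, s (ω i) - c) ^ 2 ∂(Measure.pi fun _ : Fin m => ν)
      = (1 / (m:ℝ))^2 * ∫ ω : Fin m → ℝ, (∑ i, ∑ j, d (ω i) * d (ω j))
          ∂(Measure.pi fun _ : Fin m => ν) := by
        rw [← integral_const_mul]
        exact integral_congr_ae (Filter.Eventually.of_forall fun ω => hpt ω)
    _ = (1 / (m:ℝ))^2 * ∑ i, ∑ j, ∫ ω : Fin m → ℝ, d (ω i) * d (ω j)
          ∂(Measure.pi fun _ : Fin m => ν) := by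
        congr 1
        rw [integral_finset_sum _ (fun i _ => integrable_finset_sum _ (fun j _ => hpint i j))]
        exact Finset.sum_congr rfl fun i _ => integral_finset_sum _ (fun j _ => hpint i j)
    _ = (1 / (m:ℝ))^2 * ∑ i : Fin m, ∫ x, d x * d x ∂ν := by
        congr 1
        apply Finset.sum_congr rfl
        intro i _
        rw [Finset.sum_eq_single i]
        · rw [hterm, hdiag]
        · intro j _ hji
          rw [hterm, hoff i j (Ne.symm hji)]
        · simp
    _ = (1 / (m:ℝ))^2 * ((m:ℝ) * ∫ x, d x * d x ∂ν) := by
        rw [Finset.sum_const, Finset.card_univ, Fintype.card_fin, nsmul_eq_mul]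
    _ ≤ 4 / (m:ℝ) := by
        rw [div_pow, one_pow]
        rw [div_mul_eq_mul_div, one_mul]
        rw [div_le_div_iff₀ (by positivity) (by positivity : (0:ℝ) < (m:ℝ))]
        have hmpos : (0:ℝ) < (m:ℝ) := by positivity
        nlinarith [hd2le, hmpos]


/-- **Guarantee for the simultaneous one-bit protocol for Gaussian mean estimation.**
There is a constant `C > 0` such that for every `m ≥ 1` and every `θ ∈ [−1,1]`:
if `X_1,…,X_m` are i.i.d. `N(θ,1)`, `B_i = sign(X_i)`, `B = (1/m)Σ B_i`, and
`θ̂ = oneBitEstimator B`, then `E[(θ̂ − θ)²] ≤ C/m`. -/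
theorem oneBit_protocol_mean_estimation :
    ∃ C : ℝ, 0 < C ∧
      ∀ m : ℕ, 1 ≤ m → ∀ θ ∈ Set.Icc (-1 : ℝ) 1,
        (∫ ω : Fin m → ℝ,
            (oneBitEstimator ((1 / (m : ℝ)) * ∑ i, (if 0 ≤ ω i then (1 : ℝ) else -1)) - θ) ^ 2
            ∂(Measure.pi fun _ : Fin m => gaussianReal θ 1))
          ≤ C / m := by
  refine ⟨4 * Kc ^ 2, by nlinarith [Kc_pos, sq_nonneg Kc], ?_⟩
  intro m hm θ hθ
  obtain ⟨hθ1, hθ2⟩ := hθ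
  have hs : Measurable (fun x : ℝ => if 0 ≤ x then (1:ℝ) else -1) := by
    apply Measurable.ite _ measurable_const measurable_const
    exact measurableSet_Ici
  have hb : ∀ x : ℝ, |(if 0 ≤ x then (1:ℝ) else -1)| ≤ 1 := by
    intro x; split_ifs <;> simp
  have hmean := integral_sign_gaussian θ
  have hμabs : |erf (θ / Real.sqrt 2)| ≤ 1 := by
    rw [← hmean, ← Real.norm_eq_abs]
    have h := norm_integral_le_of_norm_le_const (μ := gaussianReal θ 1) (C := 1)
      (f := fun x => if 0 ≤ x then (1:ℝ) else -1)
      (Filter.Eventually.of_forall fun x => by rw [Real.norm_eq_abs]; exact hb x)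
    simpa using h
  have hsec := pi_second_moment hs hb hμabs hmean m hm
  have hm0 : (0:ℝ) < (m:ℝ) := by exact_mod_cast hm
  have hBle : ∀ ω : Fin m → ℝ, |(1 / (m:ℝ)) * ∑ i, (if 0 ≤ ω i then (1:ℝ) else -1)| ≤ 1 := by
    intro ω
    rw [abs_mul, abs_of_pos (by positivity : (0:ℝ) < 1 / (m:ℝ))]
    have h1 : |∑ i, (if 0 ≤ ω i then (1:ℝ) else -1)| ≤ (m:ℝ) := by
      calc |∑ i, (if 0 ≤ ω i then (1:ℝ) else -1)| ≤ ∑ i, |(if 0 ≤ ω i then (1:ℝ) else -1)| :=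
            Finset.abs_sum_le_sum_abs _ _
        _ ≤ ∑ _i : Fin m, (1:ℝ) := Finset.sum_le_sum fun i _ => hb (ω i)
        _ = (m:ℝ) := by simp
    calc 1 / (m:ℝ) * |∑ i, (if 0 ≤ ω i then (1:ℝ) else -1)| ≤ 1 / (m:ℝ) * (m:ℝ) := by
          apply mul_le_mul_of_nonneg_left h1 (by positivity)
      _ = 1 := by field_simp
  have hBmeas : Measurable (fun ω : Fin m → ℝ =>
      (1 / (m:ℝ)) * ∑ i, (if 0 ≤ ω i then (1:ℝ) else -1)) := by
    apply Measurable.const_mul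
    exact Finset.measurable_sum _ fun i _ => hs.comp (measurable_pi_apply i)
  haveI : IsProbabilityMeasure (Measure.pi fun _ : Fin m => gaussianReal θ 1) := inferInstance
  have hRint : Integrable (fun ω : Fin m → ℝ =>
      Kc ^ 2 * ((1 / (m:ℝ)) * ∑ i, (if 0 ≤ ω i then (1:ℝ) else -1) - erf (θ / Real.sqrt 2)) ^ 2)
      (Measure.pi fun _ : Fin m => gaussianReal θ 1) := by
    apply (integrable_const (Kc ^ 2 * 4)).mono'
      (((hBmeas.sub measurable_const).pow_const 2).const_mul _).aestronglyMeasurable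
    filter_upwards with ω
    rw [Real.norm_eq_abs, abs_mul, abs_of_nonneg (sq_nonneg _), abs_of_nonneg (sq_nonneg _)]
    apply mul_le_mul_of_nonneg_left _ (sq_nonneg Kc)
    have h1 := hBle ω
    have h2 := abs_le.mp h1
    have h3 := abs_le.mp hμabs
    simp only [Pi.sub_apply]
    nlinarith [h2.1, h2.2, h3.1, h3.2]
  calc (∫ ω : Fin m → ℝ,
          (oneBitEstimator ((1 / (m : ℝ)) * ∑ i, (if 0 ≤ ω i then (1 : ℝ) else -1)) - θ) ^ 2
          ∂(Measure.pi fun _ : Fin m => gaussianReal θ 1))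
      ≤ ∫ ω : Fin m → ℝ,
          Kc ^ 2 * ((1 / (m:ℝ)) * ∑ i, (if 0 ≤ ω i then (1:ℝ) else -1)
            - erf (θ / Real.sqrt 2)) ^ 2
          ∂(Measure.pi fun _ : Fin m => gaussianReal θ 1) := by
        apply integral_mono_of_nonneg
          (Filter.Eventually.of_forall fun ω => sq_nonneg _) hRint
        filter_upwards with ω
        exact pointwise_bound hθ1 hθ2
    _ = Kc ^ 2 * ∫ ω : Fin m → ℝ,
          ((1 / (m:ℝ)) * ∑ i, (if 0 ≤ ω i then (1:ℝ) else -1)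
            - erf (θ / Real.sqrt 2)) ^ 2
          ∂(Measure.pi fun _ : Fin m => gaussianReal θ 1) := integral_const_mul _ _
    _ ≤ Kc ^ 2 * (4 / (m:ℝ)) := mul_le_mul_of_nonneg_left hsec (sq_nonneg Kc)
    _ = 4 * Kc ^ 2 / (m:ℝ) := by ring
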